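/- arXiv:2206.02455 — 3 statements merged into one kernel-verified Lean document; each statement's English description precedes it below -/
import Mathlib

section
/- Let S_0, S_1, ..., S_k be a homogeneous binary symmetric Markov chain on {-1,1} with P[S_0 = 1] = 1/2 and flip probability δ ∈ [0,1/2]. Let S̄ = (1/k)∑_{j=1}^k S_j be the average of the signs. Then 0 ≤ S̄² ≤ 1 almost surely, and Var(S̄²) ≤ E[1 - S̄²] ≤ 4δk. -/
/-- The value of a sign: `true ↦ 1`, `false ↦ -1`. -/
noncomputable def sgn (b : Bool) : ℝ := if b then 1 else -1

/-- Probability mass of the sign sequence `s = (S_0, S_1, …, S_k)` for a homogeneous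
binary symmetric Markov chain with uniform start and flip probability `δ`. -/
noncomputable def markovP (δ : ℝ) (k : ℕ) (s : Fin (k + 1) → Bool) : ℝ :=
  (1 / 2) * ∏ i : Fin k, (if s i.succ = s i.castSucc then 1 - δ else δ)

/-- Expectation of `f` under the Markov sign chain. -/
noncomputable def markovE (δ : ℝ) (k : ℕ) (f : (Fin (k + 1) → Bool) → ℝ) : ℝ :=
  ∑ s : Fin (k + 1) → Bool, markovP δ k s * f s

/-- The average `S̄ = (1/k) ∑_{j=1}^k S_j` of the signs. -/
noncomputable def sbar (k : ℕ) (s : Fin (k + 1) → Bool) : ℝ :=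
  (1 / (k : ℝ)) * ∑ i : Fin k, sgn (s i.succ)

lemma sum_prod_aux (δ : ℝ) : ∀ k : ℕ, ∑ s : Fin (k+1) → Bool,
    ∏ i : Fin k, (if s i.succ = s i.castSucc then (1:ℝ) - δ else δ) = 2 := by
  intro k
  induction k with
  | zero => simp [Finset.sum_const, Finset.card_univ]
  | succ k ih =>
    rw [← Equiv.sum_comp (Fin.consEquiv (fun _ : Fin (k+2) => Bool))]
    rw [Fintype.sum_prod_type]
    have key : ∀ (b : Bool) (t : Fin (k+1) → Bool),
        (∏ i : Fin (k+1), (if (Fin.consEquiv (fun _ : Fin (k+2) => Bool)) (b, t) i.succ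
            = (Fin.consEquiv (fun _ : Fin (k+2) => Bool)) (b, t) i.castSucc then (1:ℝ) - δ else δ))
        = (if t 0 = b then (1:ℝ) - δ else δ) *
          ∏ j : Fin k, (if t j.succ = t j.castSucc then (1:ℝ) - δ else δ) := by
      intro b t
      rw [Fin.prod_univ_succ]
      congr 1
    simp only [key]
    rw [Finset.sum_comm]
    have hkey2 : ∀ t : Fin (k+1) → Bool, ∑ b : Bool, (if t 0 = b then (1:ℝ) - δ else δ) *
        ∏ j : Fin k, (if t j.succ = t j.castSucc then (1:ℝ) - δ else δ)
        = ∏ j : Fin k, (if t j.succ = t j.castSucc then (1:ℝ) - δ else δ) := by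
      intro t
      rw [← Finset.sum_mul]
      have : ∑ b : Bool, (if t 0 = b then (1:ℝ) - δ else δ) = 1 := by
        cases h : t 0 <;> simp [h]
      rw [this, one_mul]
    simp only [hkey2]
    exact ih

lemma markovP_nonneg {δ : ℝ} (hδ0 : 0 ≤ δ) (hδ1 : δ ≤ 1/2) (k : ℕ)
    (s : Fin (k+1) → Bool) : 0 ≤ markovP δ k s := by
  unfold markovP
  apply mul_nonneg (by norm_num)
  apply Finset.prod_nonneg
  intro i _
  split <;> linarith

lemma markovP_sum (δ : ℝ) (k : ℕ) : ∑ s : Fin (k+1) → Bool, markovP δ k s = 1 := by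
  unfold markovP
  rw [← Finset.mul_sum, sum_prod_aux δ k]
  norm_num

lemma markovP_const (δ : ℝ) (k : ℕ) (b : Bool) :
    markovP δ k (Function.const _ b) = (1/2) * (1 - δ)^k := by
  unfold markovP
  simp [Finset.prod_const, Finset.card_univ]

lemma sbar_const (k : ℕ) (hk : 1 ≤ k) (b : Bool) :
    sbar k (Function.const _ b) = sgn b := by
  unfold sbar
  have hk' : (k : ℝ) ≠ 0 := by positivity
  simp only [Function.const_apply]
  rw [Finset.sum_const, Finset.card_univ]
  simp only [Fintype.card_fin, nsmul_eq_mul]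
  field_simp

/-- For a homogeneous binary symmetric Markov chain on `{-1,1}` with `P[S_0 = 1] = 1/2`
and flip probability `δ ∈ [0, 1/2]`: `0 ≤ S̄² ≤ 1` always, and
`Var(S̄²) ≤ E[1 - S̄²] ≤ 4δk`. -/
theorem stmt1 (k : ℕ) (hk : 1 ≤ k) (δ : ℝ) (hδ0 : 0 ≤ δ) (hδ1 : δ ≤ 1 / 2) :
    (∀ s : Fin (k + 1) → Bool, 0 ≤ (sbar k s) ^ 2 ∧ (sbar k s) ^ 2 ≤ 1) ∧
    markovE δ k (fun s => ((sbar k s) ^ 2 - markovE δ k (fun s' => (sbar k s') ^ 2)) ^ 2)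
      ≤ markovE δ k (fun s => 1 - (sbar k s) ^ 2) ∧
    markovE δ k (fun s => 1 - (sbar k s) ^ 2) ≤ 4 * δ * k := by
  have hk' : (0:ℝ) < k := by exact_mod_cast hk
  have hP0 : ∀ s, 0 ≤ markovP δ k s := markovP_nonneg hδ0 hδ1 k
  have hP1 : ∑ s : Fin (k+1) → Bool, markovP δ k s = 1 := markovP_sum δ k
  -- Part 1
  have part1 : ∀ s : Fin (k + 1) → Bool, 0 ≤ (sbar k s) ^ 2 ∧ (sbar k s) ^ 2 ≤ 1 := by
    intro s
    refine ⟨sq_nonneg _, ?_⟩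
    have habs : |sbar k s| ≤ 1 := by
      unfold sbar
      rw [abs_mul]
      have h1 : |∑ i : Fin k, sgn (s i.succ)| ≤ (k : ℝ) := by
        calc |∑ i : Fin k, sgn (s i.succ)| ≤ ∑ i : Fin k, |sgn (s i.succ)| :=
              Finset.abs_sum_le_sum_abs _ _
          _ ≤ ∑ _i : Fin k, (1:ℝ) := by
              apply Finset.sum_le_sum
              intro i _
              unfold sgn; split <;> simp
          _ = k := by simp
      have h2 : |1 / (k:ℝ)| = 1 / k := abs_of_pos (by positivity)
      rw [h2]
      rw [div_mul_eq_mul_div, one_mul, div_le_one hk']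
      exact h1
    calc (sbar k s)^2 = |sbar k s|^2 := (sq_abs _).symm
      _ ≤ 1^2 := by apply pow_le_pow_left₀ (abs_nonneg _) habs 2
      _ = 1 := one_pow 2
  refine ⟨part1, ?_, ?_⟩
  · -- variance inequality
    set X : (Fin (k+1) → Bool) → ℝ := fun s => (sbar k s)^2 with hX
    set μ : ℝ := markovE δ k (fun s' => (sbar k s')^2) with hμ
    have hμ' : ∑ s : Fin (k+1) → Bool, markovP δ k s * X s = μ := rfl
    have hvar : markovE δ k (fun s => (X s - μ)^2)
        = (∑ s : Fin (k+1) → Bool, markovP δ k s * (X s * X s)) - μ^2 := by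
      unfold markovE
      rw [Finset.sum_congr rfl (fun s _ => by
        show markovP δ k s * (X s - μ)^2 =
          markovP δ k s * (X s * X s) - μ * (2 * (markovP δ k s * X s)) + μ^2 * markovP δ k s
        ring)]
      rw [Finset.sum_add_distrib, Finset.sum_sub_distrib, ← Finset.mul_sum, ← Finset.mul_sum,
        ← Finset.mul_sum, hμ', hP1]
      ring
    have hone : markovE δ k (fun s => 1 - X s) = 1 - μ := by
      unfold markovE
      rw [Finset.sum_congr rfl (fun s _ => by
        show markovP δ k s * (1 - X s) = markovP δ k s - markovP δ k s * X s
        ring)]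
      rw [Finset.sum_sub_distrib, hμ', hP1]
    have hmono : ∑ s : Fin (k+1) → Bool, markovP δ k s * (X s * X s) ≤ μ := by
      rw [← hμ']
      apply Finset.sum_le_sum
      intro s _
      apply mul_le_mul_of_nonneg_left _ (hP0 s)
      calc X s * X s ≤ 1 * X s :=
            mul_le_mul_of_nonneg_right (part1 s).2 (part1 s).1
        _ = X s := one_mul _
    show markovE δ k (fun s => (X s - μ)^2) ≤ markovE δ k (fun s => 1 - X s)
    rw [hvar, hone]
    nlinarith [sq_nonneg (1 - μ)]
  · -- tail bound
    have hne : (Function.const (Fin (k+1)) true) ≠ (Function.const (Fin (k+1)) false) := by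
      intro h
      have := congrFun h 0
      simp at this
    have hbound : markovE δ k (fun s => 1 - (sbar k s)^2)
        ≤ ∑ s : Fin (k+1) → Bool, markovP δ k s *
            (if s = Function.const (Fin (k+1)) true ∨ s = Function.const (Fin (k+1)) false
              then 0 else 1) := by
      unfold markovE
      apply Finset.sum_le_sum
      intro s _
      apply mul_le_mul_of_nonneg_left _ (hP0 s)
      show (1:ℝ) - (sbar k s)^2 ≤ _
      by_cases h : s = Function.const (Fin (k+1)) true ∨ s = Function.const (Fin (k+1)) false
      · rw [if_pos h]
        rcases h with h | h <;> subst h <;>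
          · rw [sbar_const k hk]; unfold sgn; norm_num
      · rw [if_neg h]
        have := (part1 s).1
        linarith
    have hsplit : ∑ s : Fin (k+1) → Bool, markovP δ k s *
        (if s = Function.const (Fin (k+1)) true ∨ s = Function.const (Fin (k+1)) false
          then 0 else 1) = 1 - (1 - δ)^k := by
      have e : ∀ s : Fin (k+1) → Bool, markovP δ k s *
          (if s = Function.const (Fin (k+1)) true ∨ s = Function.const (Fin (k+1)) false
            then (0:ℝ) else 1)
          = markovP δ k s - ((if s = Function.const (Fin (k+1)) true then markovP δ k s else 0)
            + (if s = Function.const (Fin (k+1)) false then markovP δ k s else 0)) := by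
        intro s
        by_cases h1 : s = Function.const (Fin (k+1)) true
        · subst h1; simp [hne]
        · by_cases h2 : s = Function.const (Fin (k+1)) false
          · subst h2; simp [h1]
          · simp [h1, h2]
      rw [Finset.sum_congr rfl (fun s _ => e s), Finset.sum_sub_distrib, hP1,
        Finset.sum_add_distrib,
        Finset.sum_ite_eq' Finset.univ (Function.const (Fin (k+1)) true)
          (fun s => markovP δ k s),
        Finset.sum_ite_eq' Finset.univ (Function.const (Fin (k+1)) false)
          (fun s => markovP δ k s)]
      simp only [Finset.mem_univ, if_true]
      rw [markovP_const, markovP_const]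
      ring
    have hbern : 1 - (1 - δ)^k ≤ δ * k := by
      have := one_add_mul_le_pow (a := -δ) (by linarith) k
      have h2 : (1:ℝ) + k * (-δ) ≤ (1 - δ)^k := by
        rw [show (1:ℝ) - δ = 1 + (-δ) by ring]
        exact this
      nlinarith
    calc markovE δ k (fun s => 1 - (sbar k s)^2) ≤ 1 - (1-δ)^k := by rw [← hsplit]; exact hbound
      _ ≤ δ * k := hbern
      _ ≤ 4 * δ * k := by nlinarith
end

section
/- Let h_b(δ) = -δ·log(δ) - (1-δ)·log(1-δ) be the binary entropy (natural log). Then for every ε ∈ (0, 1/2): h_b(1/2 - ε) ≥ log(2) - 5ε². -/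
/-- For the binary entropy `h_b(δ) = -δ log δ - (1-δ) log(1-δ)` (natural logarithm),
and every `ε ∈ (0, 1/2)`: `h_b(1/2 - ε) ≥ log 2 - 5ε²`. -/
theorem stmt13 (ε : ℝ) (h0 : 0 < ε) (h1 : ε < 1 / 2) :
    Real.log 2 - 5 * ε ^ 2 ≤
      -((1 / 2 - ε) * Real.log (1 / 2 - ε)) -
        (1 - (1 / 2 - ε)) * Real.log (1 - (1 / 2 - ε)) := by
  have hx1 : (0:ℝ) < 1 - 2 * ε := by linarith
  have hx2 : (0:ℝ) < 1 + 2 * ε := by linarith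
  have e1 : Real.log (1 / 2 - ε) = Real.log (1 - 2 * ε) - Real.log 2 := by
    rw [show (1 / 2 - ε : ℝ) = (1 - 2 * ε) / 2 by ring,
      Real.log_div (ne_of_gt hx1) two_ne_zero]
  have e2 : Real.log (1 - (1 / 2 - ε)) = Real.log (1 + 2 * ε) - Real.log 2 := by
    rw [show (1 - (1 / 2 - ε) : ℝ) = (1 + 2 * ε) / 2 by ring,
      Real.log_div (ne_of_gt hx2) two_ne_zero]
  have l1 : Real.log (1 - 2 * ε) ≤ -(2 * ε) := by
    have := Real.log_le_sub_one_of_pos hx1; linarith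
  have l2 : Real.log (1 + 2 * ε) ≤ 2 * ε := by
    have := Real.log_le_sub_one_of_pos hx2; linarith
  rw [e1, e2]
  nlinarith [mul_le_mul_of_nonneg_left l1 (by linarith : (0:ℝ) ≤ 1 / 2 - ε),
    mul_le_mul_of_nonneg_left l2 (by linarith : (0:ℝ) ≤ 1 / 2 + ε), sq_nonneg ε]
end

section
/- For any integer d ≥ 2 and any α, β with 0 < β ≤ α ≤ π/2: (∫_0^α sin^{d-2}(x) dx) / (∫_0^β sin^{d-2}(x) dx) ≤ sec(α) · sin^{d-1}(α)/sin^{d-1}(β). -/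
open Real intervalIntegral in
private lemma int_sin_pow_mul_cos (n : ℕ) (γ : ℝ) :
    ∫ x in (0:ℝ)..γ, Real.sin x ^ n * Real.cos x = Real.sin γ ^ (n+1) / (n+1) := by
  have h : ∀ x ∈ Set.uIcc (0:ℝ) γ,
      HasDerivAt (fun y => Real.sin y ^ (n+1) / (n+1)) (Real.sin x ^ n * Real.cos x) x := by
    intro x _
    have := ((Real.hasDerivAt_sin x).pow (n+1)).div_const (n+1)
    refine this.congr_deriv ?_
    rw [Nat.add_sub_cancel]; push_cast
    field_simp
  have hc : IntervalIntegrable (fun x => Real.sin x ^ n * Real.cos x) MeasureTheory.volume 0 γ :=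
    (Continuous.mul (Real.continuous_sin.pow n) Real.continuous_cos).intervalIntegrable _ _
  rw [intervalIntegral.integral_eq_sub_of_hasDerivAt h hc]
  simp

/-- For `d ≥ 2` and angles `0 < β ≤ α ≤ π/2`, the ratio of spherical-cap areas satisfies
`(∫_0^α sin^{d-2} x dx)/(∫_0^β sin^{d-2} x dx) ≤ sec(α)·sin^{d-1}(α)/sin^{d-1}(β)`,
stated in multiplied-out form (so that it remains meaningful at `α = π/2`). -/
theorem stmt17 (d : ℕ) (hd : 2 ≤ d) (α β : ℝ) (hβ : 0 < β) (hβα : β ≤ α)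
    (hα : α ≤ Real.pi / 2) :
    Real.cos α * Real.sin β ^ (d - 1) * (∫ x in (0 : ℝ)..α, Real.sin x ^ (d - 2)) ≤
      Real.sin α ^ (d - 1) * ∫ x in (0 : ℝ)..β, Real.sin x ^ (d - 2) := by
  obtain ⟨n, rfl⟩ : ∃ n, d = n + 2 := ⟨d - 2, by omega⟩
  have hd1 : n + 2 - 1 = n + 1 := by omega
  have hd2 : n + 2 - 2 = n := by omega
  rw [hd1, hd2]
  have hα0 : (0:ℝ) < α := lt_of_lt_of_le hβ hβα
  have hβπ : β ≤ Real.pi / 2 := le_trans hβα hα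
  have hsinα : 0 ≤ Real.sin α := Real.sin_nonneg_of_nonneg_of_le_pi hα0.le
    (le_trans hα (by linarith [Real.pi_pos]))
  have hsinβ : 0 ≤ Real.sin β := Real.sin_nonneg_of_nonneg_of_le_pi hβ.le
    (le_trans hβπ (by linarith [Real.pi_pos]))
  -- integrability
  have intα : IntervalIntegrable (fun x => Real.sin x ^ n) MeasureTheory.volume 0 α :=
    (Real.continuous_sin.pow n).intervalIntegrable _ _
  have intβ : IntervalIntegrable (fun x => Real.sin x ^ n) MeasureTheory.volume 0 β :=
    (Real.continuous_sin.pow n).intervalIntegrable _ _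
  have intαc : IntervalIntegrable (fun x => Real.sin x ^ n * Real.cos x) MeasureTheory.volume 0 α :=
    ((Real.continuous_sin.pow n).mul Real.continuous_cos).intervalIntegrable _ _
  have intβc : IntervalIntegrable (fun x => Real.sin x ^ n * Real.cos x) MeasureTheory.volume 0 β :=
    ((Real.continuous_sin.pow n).mul Real.continuous_cos).intervalIntegrable _ _
  -- key bound 1 : cos α * ∫_0^α sin^n ≤ sin α^(n+1)/(n+1)
  have h1 : Real.cos α * ∫ x in (0:ℝ)..α, Real.sin x ^ n ≤ Real.sin α ^ (n+1) / (n+1) := by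
    rw [← int_sin_pow_mul_cos n α, ← intervalIntegral.integral_const_mul]
    apply intervalIntegral.integral_mono_on hα0.le (intα.const_mul _) intαc
    intro x hx
    have hx0 : 0 ≤ x := hx.1
    have hxα : x ≤ α := hx.2
    have hsx : 0 ≤ Real.sin x ^ n :=
      pow_nonneg (Real.sin_nonneg_of_nonneg_of_le_pi hx0
        (le_trans (le_trans hxα hα) (by linarith [Real.pi_pos]))) n
    have hcos : Real.cos α ≤ Real.cos x :=
      Real.cos_le_cos_of_nonneg_of_le_pi hx0 (le_trans hα (by linarith [Real.pi_pos])) hxα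
    calc Real.cos α * Real.sin x ^ n ≤ Real.cos x * Real.sin x ^ n :=
          mul_le_mul_of_nonneg_right hcos hsx
      _ = Real.sin x ^ n * Real.cos x := mul_comm _ _
  -- key bound 2 : sin β^(n+1)/(n+1) ≤ ∫_0^β sin^n
  have h2 : Real.sin β ^ (n+1) / (n+1) ≤ ∫ x in (0:ℝ)..β, Real.sin x ^ n := by
    rw [← int_sin_pow_mul_cos n β]
    apply intervalIntegral.integral_mono_on hβ.le intβc intβ
    intro x hx
    have hx0 : 0 ≤ x := hx.1
    have hsx : 0 ≤ Real.sin x ^ n :=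
      pow_nonneg (Real.sin_nonneg_of_nonneg_of_le_pi hx0
        (le_trans (le_trans hx.2 hβπ) (by linarith [Real.pi_pos]))) n
    have hcos : Real.cos x ≤ 1 := Real.cos_le_one x
    nlinarith
  -- combine
  have hIα0 : 0 ≤ Real.cos α * ∫ x in (0:ℝ)..α, Real.sin x ^ n := by
    have hcα : 0 ≤ Real.cos α := Real.cos_nonneg_of_mem_Icc ⟨by linarith [Real.pi_pos], hα⟩
    have : 0 ≤ ∫ x in (0:ℝ)..α, Real.sin x ^ n := by
      apply intervalIntegral.integral_nonneg hα0.le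
      intro x hx
      exact pow_nonneg (Real.sin_nonneg_of_nonneg_of_le_pi hx.1
        (le_trans (le_trans hx.2 hα) (by linarith [Real.pi_pos]))) n
    positivity
  have hsβp : 0 ≤ Real.sin β ^ (n+1) := pow_nonneg hsinβ _
  have hsαp : 0 ≤ Real.sin α ^ (n+1) := pow_nonneg hsinα _
  calc Real.cos α * Real.sin β ^ (n+1) * ∫ x in (0:ℝ)..α, Real.sin x ^ n
      = Real.sin β ^ (n+1) * (Real.cos α * ∫ x in (0:ℝ)..α, Real.sin x ^ n) := by ring
    _ ≤ Real.sin β ^ (n+1) * (Real.sin α ^ (n+1) / (n+1)) :=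
        mul_le_mul_of_nonneg_left h1 hsβp
    _ = Real.sin α ^ (n+1) * (Real.sin β ^ (n+1) / (n+1)) := by ring
    _ ≤ Real.sin α ^ (n+1) * ∫ x in (0:ℝ)..β, Real.sin x ^ n :=
        mul_le_mul_of_nonneg_left h2 hsαp
end
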